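/- Every dual logit ρ with representation (v₁,v₂) is a decision-conflict logit with representation (u,D), where u(a) := v₁(a)·v₂(a) and D(A) := (∑_{b∈A} v₁(b))·(∑_{b∈A} v₂(b)) − ∑_{b∈A} v₁(b)·v₂(b); moreover this D is additive across pairs: for every menu A, D(A) = ∑_{{a,b}⊆A, a≠b} (v₁(a)v₂(b) + v₁(b)v₂(a)) = ∑_{{a,b}⊆A, a≠b} D({a,b}), where the sums run over unordered pairs of distinct elements of A. -/
import Mathlib


open Finset

variable {X : Type*} [Fintype X] [DecidableEq X]

/-- The probability of choosing the outside option (deferring) at menu `A`. -/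
noncomputable def defer (ρ : Finset X → X → ℝ) (A : Finset X) : ℝ :=
  1 - ∑ a ∈ A, ρ A a

/-- `ρ` is a random non-forced choice model on `X`. -/
def IsRNFC (ρ : Finset X → X → ℝ) : Prop :=
  ∀ A : Finset X, A.Nonempty →
    (∀ a ∈ A, 0 ≤ ρ A a ∧ ρ A a ≤ 1) ∧
    (∀ a, a ∉ A → ρ A a = 0) ∧
    (∑ a ∈ A, ρ A a) ≤ 1

/-- `ρ` is a decision-conflict logit with representation `(u, D)`. -/
def IsDCL (ρ : Finset X → X → ℝ) (u : X → ℝ) (D : Finset X → ℝ) : Prop :=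
  (∀ a, 0 < u a) ∧
  (∀ A : Finset X, A.Nonempty → 0 ≤ D A ∧ (D A = 0 ↔ A.card = 1)) ∧
  (∀ A : Finset X, A.Nonempty → ∀ a ∈ A, ρ A a = u a / ((∑ b ∈ A, u b) + D A))

lemma key1 (v₁ v₂ : X → ℝ) (A : Finset X) :
    (∑ b ∈ A, v₁ b) * (∑ b ∈ A, v₂ b) - ∑ b ∈ A, v₁ b * v₂ b
      = ∑ p ∈ A.offDiag, v₁ p.1 * v₂ p.2 := by
  have h : (∑ b ∈ A, v₁ b) * (∑ b ∈ A, v₂ b)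
      = ∑ p ∈ A ×ˢ A, v₁ p.1 * v₂ p.2 := by
    rw [Finset.sum_mul_sum, Finset.sum_product]
  rw [h, ← Finset.diag_union_offDiag A,
    Finset.sum_union (Finset.disjoint_diag_offDiag A), Finset.sum_diag]
  ring

lemma keyfilter (v₁ v₂ : X → ℝ) (A S : Finset X) (hS : S ∈ A.powersetCard 2) :
    (A.offDiag.filter (fun p => ({p.1, p.2} : Finset X) = S)) = S.offDiag := by
  rw [Finset.mem_powersetCard] at hS
  obtain ⟨hSA, hcard⟩ := hS
  ext p
  simp only [Finset.mem_filter, Finset.mem_offDiag]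
  constructor
  · rintro ⟨⟨-, -, hne⟩, heq⟩
    refine ⟨?_, ?_, hne⟩
    · rw [← heq]; simp
    · rw [← heq]; simp
  · rintro ⟨h1, h2, hne⟩
    refine ⟨⟨hSA h1, hSA h2, hne⟩, ?_⟩
    apply Finset.eq_of_subset_of_card_le
    · intro x hx
      simp only [Finset.mem_insert, Finset.mem_singleton] at hx
      rcases hx with rfl | rfl <;> assumption
    · rw [hcard, Finset.card_insert_of_notMem (by simpa using hne),
        Finset.card_singleton]

/-- Every dual logit is a decision-conflict logit with `u(a) = v₁(a)·v₂(a)` and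
`D(A) = (∑_{b∈A} v₁(b))·(∑_{b∈A} v₂(b)) − ∑_{b∈A} v₁(b)·v₂(b)`; moreover this `D` equals
the sum over (un)ordered pairs of distinct elements of `A` of the cross terms
`v₁(a)v₂(b) + v₁(b)v₂(a)`, i.e. it is additive across binary submenus. -/
theorem stmt6 (ρ : Finset X → X → ℝ) (hρ : IsRNFC ρ)
    (v₁ v₂ : X → ℝ) (h₁ : ∀ a, 0 < v₁ a) (h₂ : ∀ a, 0 < v₂ a)
    (hd : ∀ A : Finset X, A.Nonempty → ∀ a ∈ A,
      ρ A a = (v₁ a / ∑ b ∈ A, v₁ b) * (v₂ a / ∑ b ∈ A, v₂ b)) :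
    IsDCL ρ (fun a => v₁ a * v₂ a)
      (fun A => (∑ b ∈ A, v₁ b) * (∑ b ∈ A, v₂ b) - ∑ b ∈ A, v₁ b * v₂ b) ∧
    ∀ A : Finset X,
      ((∑ b ∈ A, v₁ b) * (∑ b ∈ A, v₂ b) - ∑ b ∈ A, v₁ b * v₂ b
        = ∑ p ∈ A.offDiag, v₁ p.1 * v₂ p.2) ∧
      ((∑ b ∈ A, v₁ b) * (∑ b ∈ A, v₂ b) - ∑ b ∈ A, v₁ b * v₂ b
        = ∑ S ∈ A.powersetCard 2,
            ((∑ b ∈ S, v₁ b) * (∑ b ∈ S, v₂ b) - ∑ b ∈ S, v₁ b * v₂ b)) := by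
  constructor
  · refine ⟨fun a => mul_pos (h₁ a) (h₂ a), ?_, ?_⟩
    · intro A hA
      beta_reduce
      rw [key1 v₁ v₂ A]
      have hpos : ∀ p ∈ A.offDiag, 0 ≤ v₁ p.1 * v₂ p.2 :=
        fun p _ => le_of_lt (mul_pos (h₁ p.1) (h₂ p.2))
      refine ⟨Finset.sum_nonneg hpos, ?_⟩
      constructor
      · intro h0
        by_contra hc
        have h1le : 1 ≤ A.card := Finset.one_le_card.mpr hA
        have h1lt : 1 < A.card := lt_of_le_of_ne h1le (fun h => hc h.symm)
        have hne : A.offDiag.Nonempty := by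
          obtain ⟨a, ha, b, hb, hab⟩ := Finset.one_lt_card.mp h1lt
          exact ⟨(a, b), Finset.mem_offDiag.mpr ⟨ha, hb, hab⟩⟩
        have := Finset.sum_pos
          (fun p (_ : p ∈ A.offDiag) => mul_pos (h₁ p.1) (h₂ p.2)) hne
        linarith
      · intro h1
        obtain ⟨a, rfl⟩ := Finset.card_eq_one.mp h1
        simp [Finset.offDiag_singleton]
    · intro A hA a ha
      have hS1 : 0 < ∑ b ∈ A, v₁ b := Finset.sum_pos (fun b _ => h₁ b) hA
      have hS2 : 0 < ∑ b ∈ A, v₂ b := Finset.sum_pos (fun b _ => h₂ b) hA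
      rw [hd A hA a ha]
      simp only
      have hden : (∑ b ∈ A, v₁ b * v₂ b)
          + ((∑ b ∈ A, v₁ b) * (∑ b ∈ A, v₂ b) - ∑ b ∈ A, v₁ b * v₂ b)
          = (∑ b ∈ A, v₁ b) * (∑ b ∈ A, v₂ b) := by ring
      rw [hden, div_mul_div_comm]
  · intro A
    refine ⟨key1 v₁ v₂ A, ?_⟩
    rw [key1 v₁ v₂ A]
    have hmaps : ∀ p ∈ A.offDiag, ({p.1, p.2} : Finset X) ∈ A.powersetCard 2 := by
      intro p hp
      rw [Finset.mem_offDiag] at hp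
      rw [Finset.mem_powersetCard]
      refine ⟨?_, ?_⟩
      · intro x hx
        simp only [Finset.mem_insert, Finset.mem_singleton] at hx
        rcases hx with rfl | rfl
        · exact hp.1
        · exact hp.2.1
      · rw [Finset.card_insert_of_notMem (by simpa using hp.2.2),
          Finset.card_singleton]
    rw [← Finset.sum_fiberwise_of_maps_to hmaps (fun p => v₁ p.1 * v₂ p.2)]
    apply Finset.sum_congr rfl
    intro S hS
    rw [key1 v₁ v₂ S, keyfilter v₁ v₂ A S hS]
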